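/- arXiv:2007.05795 — 2 statements merged into one kernel-verified Lean document; each statement's English description precedes it below -/
import Mathlib

section
/- Let (𝒫, {R}) be a control problem with a single requirement satisfying the CNMS properties, where R = (e needs C), the event e belongs to exactly one plant Pk ∈ 𝒫 (which is an actuator automaton not mentioned in C), every plant mentioned in C is a sensor automaton, C is in disjunctive normal form over state references with at most one reference per plant per conjunct and no negated reference to a single-state plant, and every plant in 𝒫 is strongly connected. Then from any global state q of the composed plant there exists a string s such that the state r reached by s satisfies C. -/
open scoped Classical

/-- A finite-automaton-style structure: alphabet, partial transition
function, initial state, and marked states. -/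
structure Aut (Q E : Type) where
  alph : Set E
  δ : Q → E → Option Q
  q0 : Q
  Qm : Set Q

namespace Aut

variable {Q Q1 Q2 E : Type}

/-- Extension of the partial transition function to strings. -/
def run (A : Aut Q E) : Q → List E → Option Q
  | q, [] => some q
  | q, e :: s => (A.δ q e).bind fun q' => A.run q' s

/-- Generated language. -/
def Lang (A : Aut Q E) : Set (List E) := {s | (A.run A.q0 s).isSome}

/-- Marked language. -/
def LangM (A : Aut Q E) : Set (List E) := {s | ∃ q ∈ A.Qm, A.run A.q0 s = some q}

def Reachable (A : Aut Q E) (q : Q) : Prop := ∃ s, A.run A.q0 s = some q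

def Coreachable (A : Aut Q E) (q : Q) : Prop :=
  ∃ s q', A.run q s = some q' ∧ q' ∈ A.Qm

def Trim (A : Aut Q E) : Prop := ∀ q, A.Reachable q ∧ A.Coreachable q

def Nonblocking (A : Aut Q E) : Prop := ∀ q, A.Reachable q → A.Coreachable q

def StronglyConnected (A : Aut Q E) : Prop := ∀ q1 q2 : Q, ∃ s, A.run q1 s = some q2

/-- Synchronous composition of two automata. -/
noncomputable def sync (A : Aut Q1 E) (B : Aut Q2 E) : Aut (Q1 × Q2) E where
  alph := A.alph ∪ B.alph
  δ := fun p e =>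
    if e ∈ A.alph ∧ e ∈ B.alph then
      match A.δ p.1 e, B.δ p.2 e with
      | some a, some b => some (a, b)
      | _, _ => none
    else if e ∈ A.alph then (A.δ p.1 e).map (fun a => (a, p.2))
    else if e ∈ B.alph then (B.δ p.2 e).map (fun b => (p.1, b))
    else none
  q0 := (A.q0, B.q0)
  Qm := {p | p.1 ∈ A.Qm ∧ p.2 ∈ B.Qm}

end Aut

namespace Aut

/-- Synchronous composition of a product system (pairwise disjoint alphabets):
the shuffle automaton on the product state space. -/
noncomputable def shuffle {m : ℕ} {Q : Fin m → Type} {E : Type}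
    (A : ∀ i, Aut (Q i) E) : Aut (∀ i, Q i) E where
  alph := ⋃ i, (A i).alph
  δ := fun q e =>
    if h : ∃ i, e ∈ (A i).alph then
      ((A h.choose).δ (q h.choose) e).map fun q' => Function.update q h.choose q'
    else none
  q0 := fun i => (A i).q0
  Qm := {q | ∀ i, q i ∈ (A i).Qm}

end Aut

/-- A literal: a (possibly negated) state reference `P_i.q`. -/
structure Lit (m : ℕ) (Q : Fin m → Type) where
  i : Fin m
  q : Q i
  pos : Bool

/-- Evaluation of a literal at a global state. -/
def Lit.eval {m : ℕ} {Q : Fin m → Type} (l : Lit m Q) (r : ∀ i, Q i) : Prop :=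
  if l.pos then r l.i = l.q else r l.i ≠ l.q

/-- A predicate in disjunctive normal form over state references. -/
abbrev DNF (m : ℕ) (Q : Fin m → Type) := List (List (Lit m Q))

/-- Evaluation of a DNF predicate at a global state. -/
def DNF.eval {m : ℕ} {Q : Fin m → Type} (C : DNF m Q) (r : ∀ i, Q i) : Prop :=
  ∃ conj ∈ C, ∀ l ∈ conj, l.eval r

theorem Aut.run_append {Q E : Type} (A : Aut Q E) (q : Q) (s t : List E) :
    A.run q (s ++ t) = (A.run q s).bind (fun q' => A.run q' t) := by
  induction s generalizing q with
  | nil => simp [Aut.run]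
  | cons e s ih =>
    simp only [List.cons_append, Aut.run]
    cases A.δ q e with
    | none => simp
    | some q' => simp [ih]

lemma shuffle_step {m : ℕ} {Q : Fin m → Type} {E : Type}
    (A : ∀ i, Aut (Q i) E)
    (hdisj : ∀ i j, i ≠ j → ∀ x, ¬(x ∈ (A i).alph ∧ x ∈ (A j).alph))
    (i : Fin m) (e : E) (he : e ∈ (A i).alph)
    (q : ∀ j, Q j) (b : Q i) (hδ : (A i).δ (q i) e = some b) :
    (Aut.shuffle A).δ q e = some (Function.update q i b) := by
  have hex : ∃ j, e ∈ (A j).alph := ⟨i, he⟩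
  have hch : hex.choose = i := by
    by_contra h
    exact hdisj _ _ h e ⟨hex.choose_spec, he⟩
  show (if h : ∃ j, e ∈ (A j).alph then
      ((A h.choose).δ (q h.choose) e).map fun q' => Function.update q h.choose q'
    else none) = some (Function.update q i b)
  rw [dif_pos hex]
  subst hch
  simp [hδ]

lemma shuffle_run {m : ℕ} {Q : Fin m → Type} {E : Type}
    (A : ∀ i, Aut (Q i) E)
    (hdisj : ∀ i j, i ≠ j → ∀ x, ¬(x ∈ (A i).alph ∧ x ∈ (A j).alph))
    (hdom : ∀ i q x, (A i).δ q x ≠ none → x ∈ (A i).alph)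
    (i : Fin m) (s : List E) :
    ∀ (a b : Q i), (A i).run a s = some b →
    ∀ q : ∀ j, Q j, q i = a →
      (Aut.shuffle A).run q s = some (Function.update q i b) := by
  induction s with
  | nil =>
    intro a b h q hq
    simp only [Aut.run, Option.some.injEq] at h
    subst h; subst hq
    simp [Aut.run, Function.update_eq_self]
  | cons e s ih =>
    intro a b h q hq
    simp only [Aut.run] at h
    cases hδ : (A i).δ a e with
    | none => rw [hδ] at h; simp at h
    | some a' =>
      rw [hδ] at h
      simp only [Option.bind_some] at h
      have he : e ∈ (A i).alph := hdom i a e (by rw [hδ]; simp)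
      have hstep := shuffle_step A hdisj i e he q a' (by rw [hq]; exact hδ)
      simp only [Aut.run, hstep, Option.bind_some]
      have := ih a' b h (Function.update q i a') (by simp)
      rw [this, Function.update_idem]

lemma conj_sat {m : ℕ} {Q : Fin m → Type} {E : Type}
    (A : ∀ i, Aut (Q i) E)
    (hdisj : ∀ i j, i ≠ j → ∀ x, ¬(x ∈ (A i).alph ∧ x ∈ (A j).alph))
    (hdom : ∀ i q x, (A i).δ q x ≠ none → x ∈ (A i).alph)
    (hsc : ∀ i, (A i).StronglyConnected) :
    ∀ conj : List (Lit m Q),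
    (∀ l1 ∈ conj, ∀ l2 ∈ conj, l1.i = l2.i → l1 = l2) →
    (∀ l ∈ conj, l.pos = false → ∃ a b : Q l.i, a ≠ b) →
    ∀ qg : ∀ i, Q i, ∃ (s : List E) (r : ∀ i, Q i),
      (Aut.shuffle A).run qg s = some r ∧ ∀ l ∈ conj, l.eval r := by
  intro conj
  induction conj with
  | nil => intro _ _ qg; exact ⟨[], qg, rfl, by simp⟩
  | cons l conj ih =>
    intro honce hneg qg
    obtain ⟨s1, r1, hrun1, hsat1⟩ := ih
      (fun l1 h1 l2 h2 => honce l1 (List.mem_cons_of_mem _ h1) l2 (List.mem_cons_of_mem _ h2))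
      (fun l' h' => hneg l' (List.mem_cons_of_mem _ h')) qg
    -- choose target state t for plant l.i
    have ht : ∃ t : Q l.i, (if l.pos then t = l.q else t ≠ l.q) := by
      cases hp : l.pos with
      | true => exact ⟨l.q, by simp⟩
      | false =>
        obtain ⟨a, b, hab⟩ := hneg l (List.mem_cons_self) hp
        by_cases ha : a = l.q
        · exact ⟨b, by simp [ha ▸ hab.symm]⟩
        · exact ⟨a, by simp [ha]⟩
    obtain ⟨t, hteval⟩ := ht
    obtain ⟨s2, hs2⟩ := hsc l.i (r1 l.i) t
    have hrun2 := shuffle_run A hdisj hdom l.i s2 (r1 l.i) t hs2 r1 rfl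
    refine ⟨s1 ++ s2, Function.update r1 l.i t, ?_, ?_⟩
    · rw [Aut.run_append, hrun1, Option.bind_some, hrun2]
    · intro l' hl'
      rcases List.mem_cons.mp hl' with h | h
      · subst h
        unfold Lit.eval
        simpa only [Function.update_self] using hteval
      · by_cases hi : l'.i = l.i
        · have heq : l' = l := honce l' hl' l (List.mem_cons_self) hi
          subst heq
          unfold Lit.eval
          simpa only [Function.update_self] using hteval
        · have := hsat1 l' h
          unfold Lit.eval at this ⊢
          rw [Function.update_of_ne hi]
          exact this

/-- for a CNMS control problem with a single requirement
`e needs C`, from any global state of the composed plant some string reaches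
a state satisfying `C`. -/
theorem cnms_condition_satisfiable {m : ℕ} {Q : Fin m → Type} {E : Type}
    (A : ∀ i, Aut (Q i) E) (Sc Su : Set E)
    (hpart : ∀ x : E, ¬(x ∈ Sc ∧ x ∈ Su))
    (hdisj : ∀ i j, i ≠ j → ∀ x, ¬(x ∈ (A i).alph ∧ x ∈ (A j).alph))
    (hdom : ∀ i q x, (A i).δ q x ≠ none → x ∈ (A i).alph)
    (hsc : ∀ i, (A i).StronglyConnected)
    (hmk : ∀ i, ∃ q, q ∈ (A i).Qm)
    (e : E) (C : DNF m Q) (k : Fin m)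
    (he : e ∈ (A k).alph) (hec : e ∈ Sc)
    (hact : (A k).alph ⊆ Sc)
    (hnok : ∀ conj ∈ C, ∀ l ∈ conj, l.i ≠ k)
    (hsens : ∀ conj ∈ C, ∀ l ∈ conj, (A l.i).alph ⊆ Su)
    (honce : ∀ conj ∈ C, ∀ l1 ∈ conj, ∀ l2 ∈ conj, l1.i = l2.i → l1 = l2)
    (hneg : ∀ conj ∈ C, ∀ l ∈ conj, l.pos = false → ∃ a b : Q l.i, a ≠ b)
    (hCne : C ≠ []) :
    ∀ qg : ∀ i, Q i, ∃ (s : List E) (r : ∀ i, Q i),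
      (Aut.shuffle A).run qg s = some r ∧ C.eval r := by
  intro qg
  cases C with
  | nil => exact absurd rfl hCne
  | cons conj rest =>
    obtain ⟨s, r, hrun, hsat⟩ := conj_sat A hdisj hdom hsc conj
      (honce conj (List.mem_cons_self))
      (hneg conj (List.mem_cons_self)) qg
    exact ⟨s, r, hrun, conj, List.mem_cons_self, hsat⟩
end

section
/- Let (𝒫, 𝓡) be a control problem satisfying the CNMS properties. Then P || Rj, where P = ||𝒫, is nonblocking for every single requirement Rj ∈ 𝓡: every reachable state of P || Rj can reach a marked state. -/
open scoped Classical

namespace Aut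

/-- Synchronous composition of an automaton with a state-event invariant
expression `μ needs C`: transitions labeled `μ` are removed from states
where the condition `C` is false. -/
noncomputable def restrict {Q E : Type} (A : Aut Q E) (μ : E) (C : Q → Prop) :
    Aut Q E where
  alph := A.alph
  δ := fun q e => if e = μ ∧ ¬ C q then none else A.δ q e
  q0 := A.q0
  Qm := A.Qm

end Aut

/-- `K` is controllable with respect to `G` (given uncontrollable events `Su`). -/
def Controllable {QK QG E : Type} (Su : Set E) (K : Aut QK E) (G : Aut QG E) : Prop :=
  ∀ (s : List E) (u : E), u ∈ Su → (K.run K.q0 s).isSome →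
    (G.run G.q0 (s ++ [u])).isSome → (K.run K.q0 (s ++ [u])).isSome

/-- A control problem satisfying the CNMS properties. -/
structure CNMS (m : ℕ) (Q : Fin m → Type) (E : Type) where
  plant : ∀ i, Aut (Q i) E
  /-- controllable events -/
  Sc : Set E
  /-- uncontrollable events -/
  Su : Set E
  /-- the requirements: state-event invariant expressions `μ needs C` -/
  reqs : List (E × DNF m Q)
  /-- controllable and uncontrollable events are disjoint -/
  part : ∀ e : E, ¬(e ∈ Sc ∧ e ∈ Su)
  /-- each alphabet consists of controllable and uncontrollable events -/
  events : ∀ i, (plant i).alph ⊆ Sc ∪ Su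
  /-- Property 1: the plant is a product system (pairwise disjoint alphabets) -/
  disj : ∀ i j, i ≠ j → ∀ e, ¬(e ∈ (plant i).alph ∧ e ∈ (plant j).alph)
  /-- transitions are labeled only by events of the owning plant's alphabet -/
  dom : ∀ i q e, (plant i).δ q e ≠ none → e ∈ (plant i).alph
  /-- Property 2: each plant is strongly connected ... -/
  sc : ∀ i, (plant i).StronglyConnected
  /-- ... with at least one marked state -/
  hasMarked : ∀ i, ∃ q, q ∈ (plant i).Qm
  /-- each restricted event belongs to some plant -/
  evIn : ∀ r ∈ reqs, ∃ i, r.1 ∈ (plant i).alph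
  /-- Property 3.b: restricted events are controllable -/
  ctrl : ∀ r ∈ reqs, r.1 ∈ Sc
  /-- Property 3.c: at most one requirement per event -/
  uniq : ∀ r1 ∈ reqs, ∀ r2 ∈ reqs, r1.1 = r2.1 → r1 = r2
  /-- Property 3.e: each conjunction references each plant at most once -/
  once : ∀ r ∈ reqs, ∀ conj ∈ r.2, ∀ l1 ∈ conj, ∀ l2 ∈ conj, l1.i = l2.i → l1 = l2
  /-- Property 3.f: no negated reference to a single-state plant -/
  nneg : ∀ r ∈ reqs, ∀ conj ∈ r.2, ∀ l ∈ conj, l.pos = false → ∃ a b : Q l.i, a ≠ b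
  /-- Property 3.g: each plant referenced in a condition is a sensor automaton -/
  sens : ∀ r ∈ reqs, ∀ conj ∈ r.2, ∀ l ∈ conj, (plant l.i).alph ⊆ Su
  /-- each condition is a nonempty DNF -/
  condNe : ∀ r ∈ reqs, r.2 ≠ []

namespace CNMS

variable {m : ℕ} {Q : Fin m → Type} {E : Type}

/-- The composed (monolithic) plant `‖𝒫`. -/
noncomputable def plantComp (cp : CNMS m Q E) : Aut (∀ i, Q i) E :=
  Aut.shuffle cp.plant

/-- `𝒫 ‖ 𝓡`: the plant composed with all requirements. -/
noncomputable def sup (cp : CNMS m Q E) : Aut (∀ i, Q i) E :=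
  cp.reqs.foldl (fun A r => A.restrict r.1 (fun g => r.2.eval g)) cp.plantComp

end CNMS

namespace Aut

lemma run_append_s10 {Q E : Type} (A : Aut Q E) (s t : List E) (q : Q) :
    A.run q (s ++ t) = (A.run q s).bind fun q' => A.run q' t := by
  induction s generalizing q with
  | nil => simp [run]
  | cons e s ih =>
    simp only [List.cons_append, run]
    cases A.δ q e <;> simp [ih]

lemma run_events {Q E : Type} (A : Aut Q E)
    (hdom : ∀ q e, A.δ q e ≠ none → e ∈ A.alph) :
    ∀ (s : List E) (q q' : Q), A.run q s = some q' → ∀ e ∈ s, e ∈ A.alph := by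
  intro s
  induction s with
  | nil => intro q q' _ e he; simp at he
  | cons f s ih =>
    intro q q' hrun e he
    rcases hδ : A.δ q f with _ | y
    · rw [run, hδ] at hrun; simp at hrun
    · rw [run, hδ] at hrun
      simp only [Option.bind_some] at hrun
      rcases List.mem_cons.1 he with h | h
      · subst h; exact hdom q e (by rw [hδ]; simp)
      · exact ih y q' hrun e h

lemma shuffle_δ {m : ℕ} {Q : Fin m → Type} {E : Type} (A : ∀ i, Aut (Q i) E)
    (hdisj : ∀ i j, i ≠ j → ∀ e, ¬(e ∈ (A i).alph ∧ e ∈ (A j).alph))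
    (i : Fin m) (e : E) (he : e ∈ (A i).alph) (q : ∀ j, Q j) :
    (shuffle A).δ q e = ((A i).δ (q i) e).map fun q' => Function.update q i q' := by
  have h : ∃ j, e ∈ (A j).alph := ⟨i, he⟩
  have hch : h.choose = i := by
    by_contra hne
    exact hdisj _ _ hne e ⟨h.choose_spec, he⟩
  show (if h' : ∃ j, e ∈ (A j).alph then
      ((A h'.choose).δ (q h'.choose) e).map fun q' => Function.update q h'.choose q'
    else none) = _
  rw [dif_pos h, hch]

/-- Moving a single plant inside the restricted shuffle. -/
lemma move_one {m : ℕ} {Q : Fin m → Type} {E : Type} (A : ∀ i, Aut (Q i) E)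
    (hdisj : ∀ i j, i ≠ j → ∀ e, ¬(e ∈ (A i).alph ∧ e ∈ (A j).alph))
    (hdom : ∀ i q e, (A i).δ q e ≠ none → e ∈ (A i).alph)
    (μ : E) (C : (∀ j, Q j) → Prop) (i : Fin m) :
    ∀ (s : List E) (g : ∀ j, Q j) (p : Q i),
      (A i).run (g i) s = some p →
      (∀ (x : Q i) (e : E), e ∈ s → ¬(e = μ ∧ ¬ C (Function.update g i x))) →
      ((shuffle A).restrict μ C).run g s = some (Function.update g i p) := by
  intro s
  induction s with
  | nil =>
    intro g p hrun _
    simp only [run, Option.some.injEq] at hrun ⊢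
    rw [← hrun, Function.update_eq_self]
  | cons e s ih =>
    intro g p hrun hok
    rcases hδ : (A i).δ (g i) e with _ | y
    · rw [run, hδ] at hrun; simp at hrun
    · rw [run, hδ] at hrun
      simp only [Option.bind_some] at hrun
      have he : e ∈ (A i).alph := hdom i (g i) e (by rw [hδ]; simp)
      have hcond : ¬(e = μ ∧ ¬ C g) := by
        have := hok (g i) e (List.mem_cons_self)
        rwa [Function.update_eq_self] at this
      have hstep : ((shuffle A).restrict μ C).δ g e = some (Function.update g i y) := by
        show (if e = μ ∧ ¬ C g then none else (shuffle A).δ g e) = _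
        rw [if_neg hcond, shuffle_δ A hdisj i e he g, hδ]
        rfl
      rw [run, hstep]
      simp only [Option.bind_some]
      have htail :
          ((shuffle A).restrict μ C).run (Function.update g i y) s
            = some (Function.update (Function.update g i y) i p) := by
        apply ih
        · rwa [Function.update_self]
        · intro x e' he'
          rw [Function.update_idem]
          exact hok x e' (List.mem_cons_of_mem _ he')
      rw [htail, Function.update_idem]

/-- Moving a list of plants, each to a target state, while maintaining an
invariant `P` that guarantees permission for all transitions taken. -/
lemma phase {m : ℕ} {Q : Fin m → Type} {E : Type} (A : ∀ i, Aut (Q i) E)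
    (hdisj : ∀ i j, i ≠ j → ∀ e, ¬(e ∈ (A i).alph ∧ e ∈ (A j).alph))
    (hdom : ∀ i q e, (A i).δ q e ≠ none → e ∈ (A i).alph)
    (hsc : ∀ i, (A i).StronglyConnected)
    (μ : E) (C : (∀ j, Q j) → Prop)
    (L : List (Fin m)) (t : ∀ i, Q i) (P : (∀ j, Q j) → Prop)
    (hP : ∀ i ∈ L, ∀ (g : ∀ j, Q j) (x : Q i), P g → P (Function.update g i x))
    (hok : ∀ i ∈ L, ∀ (g : ∀ j, Q j) (x : Q i) (e : E), e ∈ (A i).alph → P g →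
      ¬(e = μ ∧ ¬ C (Function.update g i x))) :
    ∀ g, P g → ∃ s g', ((shuffle A).restrict μ C).run g s = some g' ∧ P g' ∧
      ∀ j, g' j = if j ∈ L then t j else g j := by
  induction L with
  | nil =>
    intro g hg
    exact ⟨[], g, rfl, hg, fun j => by simp⟩
  | cons i L ih =>
    intro g hg
    obtain ⟨s0, hs0⟩ := hsc i (g i) (t i)
    have hev : ∀ e ∈ s0, e ∈ (A i).alph :=
      run_events (A i) (hdom i) s0 (g i) (t i) hs0
    have hmove := move_one A hdisj hdom μ C i s0 g (t i) hs0
      (fun x e he => hok i (List.mem_cons_self) g x e (hev e he) hg)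
    set g1 := Function.update g i (t i) with hg1
    have hPg1 : P g1 := hP i (List.mem_cons_self) g (t i) hg
    obtain ⟨s1, g', hrun1, hPg', hval⟩ := ih
      (fun j hj => hP j (List.mem_cons_of_mem _ hj))
      (fun j hj => hok j (List.mem_cons_of_mem _ hj)) g1 hPg1
    refine ⟨s0 ++ s1, g', ?_, hPg', ?_⟩
    · rw [run_append_s10, hmove]
      simpa using hrun1
    · intro j
      rcases Classical.em (j ∈ L) with hjL | hjL
      · simp [hval j, hjL, List.mem_cons_of_mem]
      · rcases Classical.em (j = i) with rfl | hji
        · simp [hval j, hjL, hg1, Function.update_self]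
        · simp [hval j, hjL, hg1, Function.update_of_ne hji, hji]

end Aut

section Main

variable {m : ℕ} {Q : Fin m → Type} {E : Type}

/-- Phase 1: make every literal in a conjunction true by moving the
referenced (sensor) plants. -/
lemma phase1 (cp : CNMS m Q E) (r : E × DNF m Q) (hr : r ∈ cp.reqs)
    (conj : List (Lit m Q)) (hconj : conj ∈ r.2) :
    ∀ (conj' : List (Lit m Q)), (∀ l ∈ conj', l ∈ conj) →
      ∀ g, ∃ s g',
        (cp.plantComp.restrict r.1 (fun g => r.2.eval g)).run g s = some g' ∧
        (∀ l ∈ conj', l.eval g') ∧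
        (∀ j, (∀ l ∈ conj', l.i ≠ j) → g' j = g j) := by
  intro conj'
  induction conj' with
  | nil =>
    intro _ g
    exact ⟨[], g, rfl, by simp, fun j _ => rfl⟩
  | cons l rest ih =>
    intro hsub g
    have hl : l ∈ conj := hsub l (List.mem_cons_self)
    -- a target value for component l.i making the literal true
    have htgt : ∃ x : Q l.i, ∀ g' : ∀ j, Q j, g' l.i = x → l.eval g' := by
      rcases hpos : l.pos with _ | _
      · obtain ⟨a, b, hab⟩ := cp.nneg r hr conj hconj l hl hpos
        refine ⟨if a = l.q then b else a, fun g' hg' => ?_⟩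
        simp only [Lit.eval, hpos, if_false, Bool.false_eq_true]
        rw [hg']
        split_ifs with h
        · subst h; exact fun hc => hab hc.symm
        · exact h
      · exact ⟨l.q, fun g' hg' => by simp [Lit.eval, hpos, hg']⟩
    obtain ⟨x, hx⟩ := htgt
    obtain ⟨s0, hs0⟩ := cp.sc l.i (g l.i) x
    have hev : ∀ e ∈ s0, e ∈ (cp.plant l.i).alph :=
      Aut.run_events (cp.plant l.i) (cp.dom l.i) s0 (g l.i) x hs0
    have hok : ∀ (y : Q l.i) (e : E), e ∈ s0 →
        ¬(e = r.1 ∧ ¬ (r.2.eval (Function.update g l.i y))) := by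
      intro y e he ⟨heq, _⟩
      have hSu : e ∈ cp.Su := cp.sens r hr conj hconj l hl (hev e he)
      exact cp.part e ⟨heq ▸ cp.ctrl r hr, hSu⟩
    have hmove := Aut.move_one cp.plant cp.disj cp.dom r.1
      (fun g => r.2.eval g) l.i s0 g x hs0 hok
    set g1 := Function.update g l.i x with hg1
    obtain ⟨s1, g', hrun1, heval, hunch⟩ :=
      ih (fun l' hl' => hsub l' (List.mem_cons_of_mem _ hl')) g1
    refine ⟨s0 ++ s1, g', ?_, ?_, ?_⟩
    · rw [Aut.run_append_s10]
      show ((cp.plantComp.restrict r.1 _).run g s0).bind _ = _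
      rw [show cp.plantComp = Aut.shuffle cp.plant from rfl, hmove]
      simpa using (show ((Aut.shuffle cp.plant).restrict r.1 fun g => r.2.eval g).run g1 s1 = some g' from hrun1)
    · intro l' hl'
      rcases List.mem_cons.1 hl' with rfl | hl'r
      · -- l' = l
        rcases Classical.em (∃ l'' ∈ rest, l''.i = l'.i) with ⟨l'', hl''r, hl''i⟩ | hnone
        · have : l'' = l' := cp.once r hr conj hconj l''
            (hsub l'' (List.mem_cons_of_mem _ hl''r)) l' hl hl''i
          exact this ▸ heval l'' hl''r
        · have hfix : g' l'.i = g1 l'.i := by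
            apply hunch
            intro l'' hl''
            exact fun hc => hnone ⟨l'', hl'', hc⟩
          apply hx
          rw [hfix, hg1, Function.update_self]
      · exact heval l' hl'r
    · intro j hj
      have : g' j = g1 j := hunch j (fun l' hl' => hj l' (List.mem_cons_of_mem _ hl'))
      rw [this, hg1, Function.update_of_ne (Ne.symm (hj l (List.mem_cons_self)))]

end Main

/-- for a CNMS control problem, `P ‖ Rj` is nonblocking for
every single requirement `Rj`. -/
theorem cnms_single_req_nonblocking {m : ℕ} {Q : Fin m → Type} {E : Type}
    (cp : CNMS m Q E) (r : E × DNF m Q) (hr : r ∈ cp.reqs) :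
    (cp.plantComp.restrict r.1 (fun g => r.2.eval g)).Nonblocking := by
  intro g _
  -- pick a conjunct of the condition
  have hne : r.2 ≠ [] := cp.condNe r hr
  set conj := r.2.head hne with hconjdef
  have hconj : conj ∈ r.2 := List.head_mem hne
  -- marked states of each plant
  set qm : ∀ i, Q i := fun i => (cp.hasMarked i).choose with hqm
  have hqmM : ∀ i, qm i ∈ (cp.plant i).Qm := fun i => (cp.hasMarked i).choose_spec
  -- Phase 1: make conj true
  obtain ⟨s1, g1, hrun1, heval1, _⟩ :=
    phase1 cp r hr conj hconj conj (fun l hl => hl) g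
  -- Phase 2: move all non-referenced plants to marked states
  set L2 : List (Fin m) :=
    (List.finRange m).filter (fun j => decide (¬ ∃ l ∈ conj, l.i = j)) with hL2
  have hL2mem : ∀ j, j ∈ L2 ↔ ¬ ∃ l ∈ conj, l.i = j := by
    intro j
    simp [hL2, List.mem_filter, List.mem_finRange]
  obtain ⟨s2, g2, hrun2, heval2, hval2⟩ :=
    Aut.phase cp.plant cp.disj cp.dom cp.sc r.1 (fun g => r.2.eval g)
      L2 qm (fun g => ∀ l ∈ conj, l.eval g)
      (by
        intro i hi gg x hgg l hl
        have hni : l.i ≠ i := fun hc => (hL2mem i).1 hi ⟨l, hl, hc⟩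
        have := hgg l hl
        simp only [Lit.eval] at this ⊢
        rwa [Function.update_of_ne hni])
      (by
        intro i hi gg x e _ hgg ⟨_, hC⟩
        apply hC
        refine ⟨conj, hconj, fun l hl => ?_⟩
        have hni : l.i ≠ i := fun hc => (hL2mem i).1 hi ⟨l, hl, hc⟩
        have := hgg l hl
        simp only [Lit.eval] at this ⊢
        rwa [Function.update_of_ne hni])
      g1 heval1
  -- Phase 3: move the referenced (sensor) plants to marked states
  set L3 : List (Fin m) :=
    (List.finRange m).filter (fun j => decide (∃ l ∈ conj, l.i = j)) with hL3
  have hL3mem : ∀ j, j ∈ L3 ↔ ∃ l ∈ conj, l.i = j := by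
    intro j
    simp [hL3, List.mem_filter, List.mem_finRange]
  obtain ⟨s3, g3, hrun3, _, hval3⟩ :=
    Aut.phase cp.plant cp.disj cp.dom cp.sc r.1 (fun g => r.2.eval g)
      L3 qm (fun _ => True)
      (fun _ _ _ _ _ => trivial)
      (by
        intro i hi gg x e he _ ⟨heq, _⟩
        obtain ⟨l, hl, hli⟩ := (hL3mem i).1 hi
        have hSu : e ∈ cp.Su := cp.sens r hr conj hconj l hl (hli ▸ he)
        exact cp.part e ⟨heq ▸ cp.ctrl r hr, hSu⟩)
      g2 trivial
  -- assemble
  have hg3 : ∀ j, g3 j = qm j := by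
    intro j
    rcases Classical.em (∃ l ∈ conj, l.i = j) with h | h
    · rw [hval3 j, if_pos ((hL3mem j).2 h)]
    · rw [hval3 j, if_neg (fun hc => h ((hL3mem j).1 hc)),
        hval2 j, if_pos ((hL2mem j).2 h)]
  have hrun2' : (cp.plantComp.restrict r.1 (fun g => r.2.eval g)).run g1 s2 = some g2 := hrun2
  have hrun3' : (cp.plantComp.restrict r.1 (fun g => r.2.eval g)).run g2 s3 = some g3 := hrun3
  refine ⟨s1 ++ (s2 ++ s3), g3, ?_, ?_⟩
  · rw [Aut.run_append_s10, hrun1]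
    simp only [Option.bind_some]
    rw [Aut.run_append_s10, hrun2']
    simpa using hrun3'
  · show ∀ i, g3 i ∈ (cp.plant i).Qm
    intro i
    rw [hg3 i]
    exact hqmM i
end
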